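/- The set C¹ = {x ∈ ℝ² : x₁x₂ ≥ 1, x₁ ≥ 0} is a nonempty closed convex set with recession cone rec C¹ = {x ∈ ℝ² : x₁ ≥ 0, x₂ ≥ 0}, and C¹ is approximately M-decomposable but not M-decomposable. -/
import Mathlib


open scoped InnerProductSpace Pointwise ENNReal
open Metric Filter

/-- The support function `σ_C(d) = sup_{x ∈ C} ⟪d, x⟫` of a set `C ⊆ ℝⁿ`,
with values in the extended reals. -/
noncomputable def suppFun {n : ℕ} (C : Set (EuclideanSpace ℝ (Fin n)))
    (d : EuclideanSpace ℝ (Fin n)) : EReal :=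
  ⨆ x ∈ C, ((⟪d, x⟫_ℝ : ℝ) : EReal)

/-- The effective domain `dom σ_C = {d : σ_C(d) < +∞}` of the support function. -/
def suppDom {n : ℕ} (C : Set (EuclideanSpace ℝ (Fin n))) :
    Set (EuclideanSpace ℝ (Fin n)) :=
  {d | suppFun C d < ⊤}

/-- The recession cone `rec C` of a set `C`. -/
def recCone {n : ℕ} (C : Set (EuclideanSpace ℝ (Fin n))) :
    Set (EuclideanSpace ℝ (Fin n)) :=
  {y | ∀ x ∈ C, ∀ t : ℝ, 0 ≤ t → x + t • y ∈ C}

/-- The truncation `C_r = (C ∩ rB) + rec C` of `C` of radius `r`. -/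
def trunc {n : ℕ} (C : Set (EuclideanSpace ℝ (Fin n))) (r : ℝ) :
    Set (EuclideanSpace ℝ (Fin n)) :=
  (C ∩ closedBall 0 r) + recCone C

/-- `C` is approximately M-decomposable: for every `ε > 0` there is `r > 0`
with `C ⊆ C_r + εB`. -/
def ApproxMDecomposable {n : ℕ} (C : Set (EuclideanSpace ℝ (Fin n))) : Prop :=
  ∀ ε > (0 : ℝ), ∃ r > (0 : ℝ), C ⊆ trunc C r + closedBall 0 ε

/-- `C` is M-decomposable: `C = M + rec C` for some compact convex `M`. -/
def MDecomposable {n : ℕ} (C : Set (EuclideanSpace ℝ (Fin n))) : Prop :=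
  ∃ M : Set (EuclideanSpace ℝ (Fin n)), IsCompact M ∧ Convex ℝ M ∧ C = M + recCone C

/-- `C` is hyperbolic: `C ⊆ M + rec C` for some compact convex `M`. -/
def Hyperbolic {n : ℕ} (C : Set (EuclideanSpace ℝ (Fin n))) : Prop :=
  ∃ M : Set (EuclideanSpace ℝ (Fin n)), IsCompact M ∧ Convex ℝ M ∧ C ⊆ M + recCone C

/-- The polar cone `K° = {d : ⟪d, x⟫ ≤ 0 for all x ∈ K}` of a cone `K`. -/
def polarCone {n : ℕ} (K : Set (EuclideanSpace ℝ (Fin n))) :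
    Set (EuclideanSpace ℝ (Fin n)) :=
  {d | ∀ x ∈ K, ⟪d, x⟫_ℝ ≤ 0}

/-- The set `C¹ = {x ∈ ℝ² : x₁x₂ ≥ 1, x₁ ≥ 0}`. -/
def hyperbolaSet : Set (EuclideanSpace ℝ (Fin 2)) :=
  {x | 1 ≤ x 0 * x 1 ∧ 0 ≤ x 0}


section HyperbolaAux
open Metric

noncomputable def hypPt (a b : ℝ) : EuclideanSpace ℝ (Fin 2) := (WithLp.equiv 2 _).symm ![a,b]

lemma hypPt0 (a b : ℝ) : hypPt a b 0 = a := by simp [hypPt]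
lemma hypPt1 (a b : ℝ) : hypPt a b 1 = b := by simp [hypPt]

lemma hypNorm_two (x : EuclideanSpace ℝ (Fin 2)) : ‖x‖ = Real.sqrt ((x 0)^2 + (x 1)^2) := by
  rw [EuclideanSpace.norm_eq]; simp [Fin.sum_univ_two, sq_abs]

lemma hypNorm_le_two {x : EuclideanSpace ℝ (Fin 2)} {a : ℝ} (ha : 0 ≤ a)
    (h : (x 0)^2 + (x 1)^2 ≤ a^2) : ‖x‖ ≤ a := by
  rw [hypNorm_two]
  calc Real.sqrt ((x 0)^2 + (x 1)^2) ≤ Real.sqrt (a^2) := Real.sqrt_le_sqrt h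
    _ = a := Real.sqrt_sq ha

lemma hypCoord1_le_norm (x : EuclideanSpace ℝ (Fin 2)) : x 1 ≤ ‖x‖ := by
  rw [hypNorm_two]
  calc x 1 ≤ |x 1| := le_abs_self _
    _ = Real.sqrt ((x 1)^2) := (Real.sqrt_sq_eq_abs _).symm
    _ ≤ _ := Real.sqrt_le_sqrt (by nlinarith [sq_nonneg (x 0)])

lemma hyp_nonempty : hyperbolaSet.Nonempty :=
  ⟨hypPt 1 1, by constructor <;> simp [hypPt]⟩

lemma hyp_closed : IsClosed hyperbolaSet := by
  have hc : ∀ i : Fin 2, Continuous fun x : EuclideanSpace ℝ (Fin 2) => x i :=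
    fun i => (EuclideanSpace.proj i (𝕜 := ℝ)).continuous
  exact (isClosed_le continuous_const ((hc 0).mul (hc 1))).inter
    (isClosed_le continuous_const (hc 0))

lemma hyp_convex : Convex ℝ hyperbolaSet := by
  intro x hx y hy a b ha hb hab
  obtain ⟨hxm, hx0⟩ := hx; obtain ⟨hym, hy0⟩ := hy
  have hx1 : 0 ≤ x 1 := by nlinarith
  have hy1 : 0 ≤ y 1 := by nlinarith
  have e0 : (a • x + b • y) 0 = a * x 0 + b * y 0 := rfl
  have e1 : (a • x + b • y) 1 = a * x 1 + b * y 1 := rfl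
  have hs : 2 ≤ x 0 * y 1 + x 1 * y 0 := by
    nlinarith [sq_nonneg (x 0 * y 1 - x 1 * y 0), mul_nonneg hx0 hy1, mul_nonneg hx1 hy0]
  constructor
  · show (1:ℝ) ≤ (a • x + b • y) 0 * (a • x + b • y) 1
    rw [e0, e1]
    nlinarith [mul_nonneg ha hb, sq_nonneg a, sq_nonneg b,
      mul_nonneg (mul_nonneg ha hb) (by linarith : (0:ℝ) ≤ x 0 * y 1 + x 1 * y 0 - 2),
      mul_nonneg (mul_nonneg ha ha) (by linarith : (0:ℝ) ≤ x 0 * x 1 - 1),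
      mul_nonneg (mul_nonneg hb hb) (by linarith : (0:ℝ) ≤ y 0 * y 1 - 1)]
  · show (0:ℝ) ≤ (a • x + b • y) 0
    rw [e0]
    have := mul_nonneg ha hx0; have := mul_nonneg hb hy0; linarith

lemma hyp_rec : recCone hyperbolaSet = {x : EuclideanSpace ℝ (Fin 2) | 0 ≤ x 0 ∧ 0 ≤ x 1} := by
  ext y; constructor
  · intro hy
    have hpt : hypPt 1 1 ∈ hyperbolaSet := by constructor <;> simp [hypPt]
    have key : ∀ t : ℝ, 0 ≤ t → 1 ≤ (1 + t * y 0) * (1 + t * y 1) ∧ 0 ≤ 1 + t * y 0 := by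
      intro t ht
      have h := hy (hypPt 1 1) hpt t ht
      have e0 : (hypPt 1 1 + t • y) 0 = 1 + t * y 0 := by simp [hypPt]
      have e1 : (hypPt 1 1 + t • y) 1 = 1 + t * y 1 := by simp [hypPt]
      obtain ⟨h1, h2⟩ := h
      rw [e0, e1] at *
      exact ⟨h1, h2⟩
    have h0 : 0 ≤ y 0 := by
      by_contra h; push_neg at h
      have ht : (0:ℝ) ≤ 2 / (-y 0) := div_nonneg (by norm_num) (by linarith)
      have h2 := (key _ ht).2
      have : 2 / (-y 0) * y 0 = -2 := by
        rw [div_mul_eq_mul_div, div_eq_iff (by linarith : -y 0 ≠ 0)]; ring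
      linarith
    refine ⟨h0, ?_⟩
    by_contra h; push_neg at h
    have ht : (0:ℝ) ≤ (y 0 + 2) / (-y 1) := div_nonneg (by linarith) (by linarith)
    obtain ⟨h1, h2⟩ := key _ ht
    have he : (y 0 + 2) / (-y 1) * y 1 = -(y 0 + 2) := by
      rw [div_mul_eq_mul_div, div_eq_iff (by linarith : -y 1 ≠ 0)]; ring
    rw [he] at h1
    nlinarith [mul_nonneg ht h0]
  · rintro ⟨h0, h1⟩ x ⟨hxm, hx0⟩ t ht
    have hx1 : 0 ≤ x 1 := by nlinarith
    have e0 : (x + t • y) 0 = x 0 + t * y 0 := rfl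
    have e1 : (x + t • y) 1 = x 1 + t * y 1 := rfl
    constructor
    · show (1:ℝ) ≤ (x + t • y) 0 * (x + t • y) 1
      rw [e0, e1]
      nlinarith [mul_nonneg ht h0, mul_nonneg ht h1, mul_nonneg hx0 (mul_nonneg ht h1),
        mul_nonneg hx1 (mul_nonneg ht h0),
        mul_nonneg (mul_nonneg ht h0) (mul_nonneg ht h1)]
    · show (0:ℝ) ≤ (x + t • y) 0
      rw [e0]
      have := mul_nonneg ht h0; linarith

lemma hypPt_mem_rec {a b : ℝ} (ha : 0 ≤ a) (hb : 0 ≤ b) : hypPt a b ∈ recCone hyperbolaSet := by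
  rw [hyp_rec]; exact ⟨by rw [hypPt0]; exact ha, by rw [hypPt1]; exact hb⟩

lemma hypPt_mem_ball {a b ε : ℝ} (hε : 0 ≤ ε) (h : a^2 + b^2 ≤ ε^2) :
    hypPt a b ∈ closedBall (0 : EuclideanSpace ℝ (Fin 2)) ε := by
  rw [mem_closedBall_zero_iff]
  exact hypNorm_le_two hε (by rw [hypPt0, hypPt1]; exact h)

lemma hyp_subset {r ε : ℝ} (hε : 0 ≤ ε) (hr2 : 2 ≤ r) (hrε : 2 / r ≤ ε) :
    hyperbolaSet ⊆ trunc hyperbolaSet r + closedBall 0 ε := by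
  have hr0 : (0:ℝ) < r := by linarith
  have h2r : (0:ℝ) < 2 / r := by positivity
  have h2r1 : 2 / r ≤ 1 := by rw [div_le_one hr0]; linarith
  have hr21 : 1 ≤ r / 2 := by linarith
  have hq : ∀ a b : ℝ, a * b = 1 → 0 ≤ a → a + b ≤ r →
      hypPt a b ∈ hyperbolaSet ∩ closedBall 0 r := by
    intro a b hab ha habr
    have hb : 0 ≤ b := by nlinarith
    refine ⟨⟨by rw [hypPt0, hypPt1, hab], by rw [hypPt0]; exact ha⟩, ?_⟩
    rw [mem_closedBall_zero_iff]
    exact hypNorm_le_two hr0.le (by rw [hypPt0, hypPt1]; nlinarith)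
  have hmul : r / 2 * (2 / r) = 1 := by field_simp
  have hsum2 : r / 2 + 2 / r ≤ r := by linarith
  intro x hx
  obtain ⟨hxm, hx0⟩ := hx
  have hx0' : 0 < x 0 := by
    rcases hx0.lt_or_eq with h | h
    · exact h
    · exfalso; rw [← h, zero_mul] at hxm; linarith
  have hx1' : 0 < x 1 := by
    by_contra h; push_neg at h
    nlinarith [mul_nonneg hx0 (neg_nonneg.2 h)]
  show x ∈ ((hyperbolaSet ∩ closedBall 0 r) + recCone hyperbolaSet) + closedBall 0 ε
  by_cases h0 : x 0 ≤ r / 2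
  · by_cases h1 : x 1 ≤ r / 2
    · refine ⟨x + hypPt 0 0, Set.add_mem_add ⟨⟨hxm, hx0⟩, ?_⟩ (hypPt_mem_rec le_rfl le_rfl),
        hypPt 0 0, hypPt_mem_ball hε (by nlinarith), ?_⟩
      · rw [mem_closedBall_zero_iff]; exact hypNorm_le_two hr0.le (by nlinarith)
      · ext i; fin_cases i <;> simp [hypPt]
    · push_neg at h1
      rcases le_total (2 / r) (x 0) with hc | hc
      · refine ⟨hypPt (2/r) (r/2) + hypPt (x 0 - 2/r) (x 1 - r/2),
          Set.add_mem_add (hq _ _ (by field_simp) h2r.le (by linarith))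
            (hypPt_mem_rec (by linarith) (by linarith)),
          hypPt 0 0, hypPt_mem_ball hε (by nlinarith), ?_⟩
        ext i; fin_cases i <;> simp [hypPt] <;> try ring
      · refine ⟨hypPt (2/r) (r/2) + hypPt 0 (x 1 - r/2),
          Set.add_mem_add (hq _ _ (by field_simp) h2r.le (by linarith))
            (hypPt_mem_rec le_rfl (by linarith)),
          hypPt (x 0 - 2/r) 0, hypPt_mem_ball hε (by nlinarith), ?_⟩
        ext i; fin_cases i <;> simp [hypPt] <;> try ring
  · push_neg at h0
    rcases le_total (2 / r) (x 1) with hc | hc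
    · refine ⟨hypPt (r/2) (2/r) + hypPt (x 0 - r/2) (x 1 - 2/r),
        Set.add_mem_add (hq _ _ hmul (by linarith) hsum2)
          (hypPt_mem_rec (by linarith) (by linarith)),
        hypPt 0 0, hypPt_mem_ball hε (by nlinarith), ?_⟩
      ext i; fin_cases i <;> simp [hypPt] <;> try ring
    · refine ⟨hypPt (r/2) (2/r) + hypPt (x 0 - r/2) 0,
        Set.add_mem_add (hq _ _ hmul (by linarith) hsum2)
          (hypPt_mem_rec (by linarith) le_rfl),
        hypPt 0 (x 1 - 2/r), hypPt_mem_ball hε (by nlinarith), ?_⟩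
      ext i; fin_cases i <;> simp [hypPt] <;> try ring

lemma hyp_approx : ApproxMDecomposable hyperbolaSet := by
  intro ε hε
  have h1 : (0:ℝ) < 2 / ε := by positivity
  refine ⟨2 + 2 / ε, by linarith, hyp_subset hε.le (by linarith) ?_⟩
  rw [div_le_iff₀ (by linarith)]
  have : 2 / ε * ε = 2 := by field_simp
  nlinarith

lemma hyp_not_M : ¬ MDecomposable hyperbolaSet := by
  rintro ⟨M, hMc, -, hM⟩
  obtain ⟨R, hR⟩ := hMc.isBounded.subset_closedBall 0
  have hR0 : 0 ≤ |R| := abs_nonneg R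
  have hδ : (0:ℝ) < 1 / (|R| + 1) := by positivity
  have hxmem : hypPt (1 / (|R| + 1)) (|R| + 1) ∈ hyperbolaSet := by
    refine ⟨?_, by rw [hypPt0]; positivity⟩
    rw [hypPt0, hypPt1]; rw [div_mul_cancel₀]; positivity
  rw [hM] at hxmem
  obtain ⟨m, hm, v, hv, hmv⟩ := hxmem
  rw [hyp_rec] at hv
  obtain ⟨hv0, hv1⟩ := hv
  have hmC : m ∈ hyperbolaSet := by
    rw [hM]
    refine ⟨m, hm, 0, ?_, add_zero m⟩
    rw [hyp_rec]
    constructor <;> simp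
  obtain ⟨hm1, hm0⟩ := hmC
  have hmv' : m + v = hypPt (1 / (|R| + 1)) (|R| + 1) := hmv
  have hcoord : m 0 + v 0 = 1 / (|R| + 1) := by
    have h := congrArg (fun z : EuclideanSpace ℝ (Fin 2) => z 0) hmv'
    simpa [hypPt0] using h
  have hm0' : m 0 ≤ 1 / (|R| + 1) := by linarith
  have hm0pos : 0 < m 0 := by
    rcases hm0.lt_or_eq with h | h
    · exact h
    · exfalso; rw [← h, zero_mul] at hm1; linarith
  have hkey : |R| + 1 ≤ m 1 := by
    have h2 : m 0 * (|R| + 1) ≤ 1 := by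
      have h3 := mul_le_mul_of_nonneg_right hm0' (by positivity : (0:ℝ) ≤ |R| + 1)
      rwa [div_mul_cancel₀ _ (by positivity : |R| + 1 ≠ 0)] at h3
    nlinarith
  have hnorm : ‖m‖ ≤ R := by
    have := hR hm; rwa [mem_closedBall_zero_iff] at this
  have h4 := hypCoord1_le_norm m
  have h5 : R ≤ |R| := le_abs_self R
  linarith

end HyperbolaAux

/-- `C¹` is nonempty closed convex with recession cone the
nonnegative quadrant, and it is approximately M-decomposable but not
M-decomposable. -/
theorem hyperbolaSet_approxMDecomposable_not_MDecomposable :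
    hyperbolaSet.Nonempty ∧ IsClosed hyperbolaSet ∧ Convex ℝ hyperbolaSet ∧
    recCone hyperbolaSet = {x : EuclideanSpace ℝ (Fin 2) | 0 ≤ x 0 ∧ 0 ≤ x 1} ∧
    ApproxMDecomposable hyperbolaSet ∧ ¬ MDecomposable hyperbolaSet := by
  exact ⟨hyp_nonempty, hyp_closed, hyp_convex, hyp_rec, hyp_approx, hyp_not_M⟩
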